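/- Let f : ℝⁿ → ℝ be continuously differentiable, let X ⊆ ℝⁿ, and let L > 0 satisfy |f(u) − f(v)| ≤ L‖u − v‖ for all u, v ∈ X. Let T, ε', α, c > 0, let k̄ ∈ ℕ, let (x_k)_{k∈ℕ} be a sequence in ℝⁿ, and let x : [0, T] → ℝⁿ be differentiable with x'(t) = −c ∇f(x(t)) for all t ∈ [0, T]. Assume that x(t) ∈ X for all t ∈ [0, T], and that for every k ∈ {k̄, …, k̄ + ⌊T/α⌋} one has x_k ∈ X and ‖x_k − x(α(k − k̄))‖ ≤ ε'. Then for every k ∈ {k̄, …, k̄ + ⌊T/α⌋}: f(x_k) ≤ f(x((k − k̄)α)) + ε'L and f(x((k − k̄)α)) + ε'L ≤ f(x_{k̄}) − c ∫₀^{(k − k̄)α} ‖∇f(x(s))‖² ds + 2ε'L. (This is the paper's Lemma 3.2 in the continuously differentiable case, where the Clarke subdifferential is the gradient and d(0, ∂f(x)) = ‖∇f(x)‖.) -/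

import Mathlib

theorem stmt_7 {n : ℕ} (f : EuclideanSpace ℝ (Fin n) → ℝ) (hf : ContDiff ℝ 1 f)
    (X : Set (EuclideanSpace ℝ (Fin n))) (L : ℝ) (hL : 0 < L)
    (hLip : ∀ u ∈ X, ∀ v ∈ X, |f u - f v| ≤ L * ‖u - v‖)
    (T ε' α c : ℝ) (hT : 0 < T) (hε' : 0 < ε') (hα : 0 < α) (hc : 0 < c)
    (kbar : ℕ) (xs : ℕ → EuclideanSpace ℝ (Fin n)) (x : ℝ → EuclideanSpace ℝ (Fin n))
    (hx : ∀ t ∈ Set.Icc (0 : ℝ) T, HasDerivAt x (-(c • gradient f (x t))) t)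
    (hxX : ∀ t ∈ Set.Icc (0 : ℝ) T, x t ∈ X)
    (hk : ∀ k : ℕ, kbar ≤ k → k ≤ kbar + ⌊T / α⌋₊ →
      xs k ∈ X ∧ ‖xs k - x (α * ((k - kbar : ℕ) : ℝ))‖ ≤ ε') :
    ∀ k : ℕ, kbar ≤ k → k ≤ kbar + ⌊T / α⌋₊ →
      f (xs k) ≤ f (x (((k - kbar : ℕ) : ℝ) * α)) + ε' * L ∧
      f (x (((k - kbar : ℕ) : ℝ) * α)) + ε' * L ≤
        f (xs kbar) - c * (∫ s in (0 : ℝ)..(((k - kbar : ℕ) : ℝ) * α), ‖gradient f (x s)‖ ^ 2)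
          + 2 * ε' * L := by
  have hxcont : ∀ s ∈ Set.Icc (0:ℝ) T, ContinuousAt x s :=
    fun s hs => (hx s hs).continuousAt
  have hgrad_cont : Continuous (fun y => gradient f y) := by
    have h1 : Continuous (fderiv ℝ f) := hf.continuous_fderiv one_ne_zero
    have : (fun y => gradient f y) =
        (fun y => (InnerProductSpace.toDual ℝ (EuclideanSpace ℝ (Fin n))).symm (fderiv ℝ f y)) := by
      ext y
      rfl
    rw [this]
    exact (InnerProductSpace.toDual ℝ _).symm.continuous.comp h1
  -- key energy identity
  have key : ∀ b ∈ Set.Icc (0:ℝ) T,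
      f (x b) = f (x 0) - c * ∫ s in (0:ℝ)..b, ‖gradient f (x s)‖ ^ 2 := by
    intro b hb
    have hb0 : (0:ℝ) ≤ b := hb.1
    have huIcc : Set.uIcc (0:ℝ) b = Set.Icc 0 b := Set.uIcc_of_le hb0
    have hsub : Set.Icc (0:ℝ) b ⊆ Set.Icc 0 T :=
      Set.Icc_subset_Icc le_rfl hb.2
    have hderiv : ∀ t ∈ Set.uIcc (0:ℝ) b,
        HasDerivAt (fun s => f (x s)) (-(c * ‖gradient f (x t)‖ ^ 2)) t := by
      intro t ht
      rw [huIcc] at ht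
      have htT : t ∈ Set.Icc (0:ℝ) T := hsub ht
      have hg : HasGradientAt f (gradient f (x t)) (x t) :=
        (hf.differentiable one_ne_zero (x t)).hasGradientAt
      have hF := hg.hasFDerivAt.comp_hasDerivAt t (hx t htT)
      have : (InnerProductSpace.toDual ℝ (EuclideanSpace ℝ (Fin n)) (gradient f (x t)))
          (-(c • gradient f (x t))) = -(c * ‖gradient f (x t)‖ ^ 2) := by
        rw [InnerProductSpace.toDual_apply_apply, inner_neg_right, real_inner_smul_right,
          real_inner_self_eq_norm_sq]
      rw [this] at hF
      exact hF
    have hint : IntervalIntegrable (fun s => -(c * ‖gradient f (x s)‖ ^ 2))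
        MeasureTheory.volume 0 b := by
      apply ContinuousOn.intervalIntegrable
      rw [huIcc]
      have hxC : ContinuousOn x (Set.Icc 0 b) := fun s hs =>
        (hxcont s (hsub hs)).continuousWithinAt
      exact (((hgrad_cont.comp_continuousOn hxC).norm.pow 2).const_smul c).neg
    have heq := intervalIntegral.integral_eq_sub_of_hasDerivAt hderiv hint
    have : (∫ s in (0:ℝ)..b, -(c * ‖gradient f (x s)‖ ^ 2)) =
        -(c * ∫ s in (0:ℝ)..b, ‖gradient f (x s)‖ ^ 2) := by
      rw [intervalIntegral.integral_neg, intervalIntegral.integral_const_mul]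
    rw [this] at heq
    linarith [heq]
  intro k hk1 hk2
  have hm : (k - kbar : ℕ) ≤ ⌊T / α⌋₊ := by omega
  set m : ℕ := k - kbar with hmdef
  have htmem : ((m:ℝ) * α) ∈ Set.Icc (0:ℝ) T := by
    constructor
    · positivity
    · have h1 : (m : ℝ) ≤ (⌊T / α⌋₊ : ℝ) := by exact_mod_cast hm
      have h2 : (⌊T / α⌋₊ : ℝ) ≤ T / α := Nat.floor_le (by positivity)
      calc (m:ℝ) * α ≤ (T / α) * α := by nlinarith
        _ = T := by field_simp
  have hxtX : x ((m:ℝ) * α) ∈ X := hxX _ htmem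
  have hmemk := hk k hk1 hk2
  have hcomm : α * (m:ℝ) = (m:ℝ) * α := mul_comm _ _
  rw [hcomm] at hmemk
  have hlip1 : |f (xs k) - f (x ((m:ℝ) * α))| ≤ L * ε' := by
    calc |f (xs k) - f (x ((m:ℝ) * α))| ≤ L * ‖xs k - x ((m:ℝ) * α)‖ :=
        hLip _ hmemk.1 _ hxtX
      _ ≤ L * ε' := by nlinarith [hmemk.2]
  have hmem0 := hk kbar le_rfl (Nat.le_add_right _ _)
  have hx0X : x 0 ∈ X := hxX 0 ⟨le_rfl, hT.le⟩
  have h0 : α * ((kbar - kbar : ℕ) : ℝ) = 0 := by simp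
  rw [h0] at hmem0
  have hlip0 : |f (xs kbar) - f (x 0)| ≤ L * ε' := by
    calc |f (xs kbar) - f (x 0)| ≤ L * ‖xs kbar - x 0‖ := hLip _ hmem0.1 _ hx0X
      _ ≤ L * ε' := by nlinarith [hmem0.2]
  have hkey := key ((m:ℝ) * α) htmem
  have h1 := abs_le.1 hlip1
  have h0' := abs_le.1 hlip0
  constructor
  · nlinarith [h1.1, h1.2]
  · nlinarith [h0'.1, h0'.2]
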